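/- For f ∈ E(W), the identity f(ξ) = (1 + |ξ|)·(Sf)(ξ/(1 + |ξ|)) holds for all ξ ∈ W, and there exists a modulus of continuity ω (depending only on the uniform continuity of Sf on the closed ball) such that |f(ξ) − f(η)| ≤ ω(|ξ − η|/(1+|ξ|+|η|)) (1 + |ξ| + |η|); in particular every f ∈ E(W) is continuous with linear growth. -/

import Mathlib

/-- For f ∈ E(W) (with continuous extension g of Sf to the closed ball),
`f(ξ) = (1+‖ξ‖)·(Sf)(ξ/(1+‖ξ‖))`, there is a modulus of continuity ω with
`|f(ξ) - f(η)| ≤ ω(‖ξ-η‖/(1+‖ξ‖+‖η‖))(1+‖ξ‖+‖η‖)`, and f has linear growth. -/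
theorem stmt10 {W : Type*} [NormedAddCommGroup W] [NormedSpace ℝ W]
    [FiniteDimensional ℝ W]
    (f : W → ℝ) (hf : Continuous f)
    (g : W → ℝ) (hg : ContinuousOn g (Metric.closedBall (0 : W) 1))
    (hext : ∀ ξhat : W, ‖ξhat‖ < 1 →
      g ξhat = (1 - ‖ξhat‖) * f ((1 - ‖ξhat‖)⁻¹ • ξhat)) :
    (∀ ξ : W, f ξ = (1 + ‖ξ‖) * g ((1 + ‖ξ‖)⁻¹ • ξ)) ∧
    (∃ ω : ℝ → ℝ, Monotone ω ∧ ω 0 = 0 ∧ ContinuousAt ω 0 ∧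
      ∀ ξ η : W, |f ξ - f η| ≤
        ω (‖ξ - η‖ / (1 + ‖ξ‖ + ‖η‖)) * (1 + ‖ξ‖ + ‖η‖)) ∧
    (∃ M : ℝ, 0 < M ∧ ∀ ξ, |f ξ| ≤ M * (1 + ‖ξ‖)) := by
  set K := Metric.closedBall (0 : W) 1 with hKdef
  have hKc : IsCompact K := isCompact_closedBall 0 1
  have h0K : (0 : W) ∈ K := Metric.mem_closedBall_self zero_le_one
  obtain ⟨C, hC⟩ := hKc.exists_bound_of_continuousOn hg
  set M : ℝ := max C 1 with hMdef
  have hM1 : (1:ℝ) ≤ M := le_max_right _ _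
  have hM0 : (0:ℝ) < M := lt_of_lt_of_le one_pos hM1
  have hgb : ∀ x ∈ K, |g x| ≤ M := fun x hx =>
    le_trans (by simpa using hC x hx) (le_max_left _ _)
  -- norm facts
  have hnorm : ∀ ξ : W, ‖(1 + ‖ξ‖)⁻¹ • ξ‖ = (1 + ‖ξ‖)⁻¹ * ‖ξ‖ := by
    intro ξ
    have ha : (0:ℝ) < 1 + ‖ξ‖ := by positivity
    rw [norm_smul, Real.norm_eq_abs, abs_of_pos (inv_pos.2 ha)]
  have hlt : ∀ ξ : W, ‖(1 + ‖ξ‖)⁻¹ • ξ‖ < 1 := by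
    intro ξ
    have ha : (0:ℝ) < 1 + ‖ξ‖ := by positivity
    rw [hnorm, ← div_eq_inv_mul]
    exact (div_lt_one ha).2 (by linarith)
  have hmem : ∀ ξ : W, (1 + ‖ξ‖)⁻¹ • ξ ∈ K := by
    intro ξ
    rw [hKdef, Metric.mem_closedBall, dist_zero_right]
    exact le_of_lt (hlt ξ)
  -- Part 1: the identity
  have hid : ∀ ξ : W, f ξ = (1 + ‖ξ‖) * g ((1 + ‖ξ‖)⁻¹ • ξ) := by
    intro ξ
    have ha : (0:ℝ) < 1 + ‖ξ‖ := by positivity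
    have h1 : 1 - ‖(1 + ‖ξ‖)⁻¹ • ξ‖ = (1 + ‖ξ‖)⁻¹ := by
      rw [hnorm]; field_simp; ring
    have h2 := hext _ (hlt ξ)
    rw [h1, inv_inv, smul_smul, mul_inv_cancel₀ ha.ne', one_smul] at h2
    rw [h2]; field_simp
  -- the modulus sets
  set S : ℝ → Set ℝ := fun t =>
    {r | ∃ x ∈ K, ∃ y ∈ K, ‖x - y‖ ≤ max t 0 ∧ r = |g x - g y|} with hSdef
  have hzero : ∀ t, (0:ℝ) ∈ S t := by
    intro t
    exact ⟨0, h0K, 0, h0K, by simp, by simp⟩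
  have hbdd : ∀ t, BddAbove (S t) := by
    intro t
    refine ⟨2 * M, ?_⟩
    rintro r ⟨x, hx, y, hy, -, rfl⟩
    calc |g x - g y| ≤ |g x| + |g y| := abs_sub _ _
      _ ≤ M + M := add_le_add (hgb x hx) (hgb y hy)
      _ = 2 * M := by ring
  have hsup_nonneg : ∀ t, 0 ≤ sSup (S t) := fun t => le_csSup (hbdd t) (hzero t)
  have hsup_mono : ∀ ⦃s t : ℝ⦄, s ≤ t → sSup (S s) ≤ sSup (S t) := by
    intro s t hst
    refine csSup_le_csSup (hbdd t) ⟨0, hzero s⟩ ?_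
    rintro r ⟨x, hx, y, hy, hxy, rfl⟩
    exact ⟨x, hx, y, hy, hxy.trans (max_le_max hst le_rfl), rfl⟩
  have hsup0 : sSup (S 0) = 0 := by
    refine le_antisymm (Real.sSup_le ?_ le_rfl) (hsup_nonneg 0)
    rintro r ⟨x, hx, y, hy, hxy, rfl⟩
    have hxy0 : ‖x - y‖ ≤ 0 := by simpa using hxy
    have : x = y := by
      have := le_antisymm hxy0 (norm_nonneg _)
      rwa [norm_eq_zero, sub_eq_zero] at this
    simp [this]
  -- the modulus
  set ω : ℝ → ℝ := fun t => sSup (S (4 * t)) + M * max t 0 with hωdef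
  have hωmono : Monotone ω := by
    intro s t hst
    exact add_le_add (hsup_mono (by linarith))
      (mul_le_mul_of_nonneg_left (max_le_max hst le_rfl) hM0.le)
  have hω0 : ω 0 = 0 := by
    simp [hωdef, hsup0]
  -- continuity at 0
  have hωcont : ContinuousAt ω 0 := by
    have hUC := hKc.uniformContinuousOn_of_continuous hg
    rw [Metric.continuousAt_iff]
    intro ε hε
    obtain ⟨δ, hδ, hδ'⟩ := (Metric.uniformContinuousOn_iff.1 hUC) (ε/4) (by linarith)
    refine ⟨min (δ/8) (ε/(8*M)), by positivity, ?_⟩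
    intro t ht
    rw [Real.dist_eq, sub_zero] at ht
    have ht1 : |t| < δ/8 := lt_of_lt_of_le ht (min_le_left _ _)
    have ht2 : |t| < ε/(8*M) := lt_of_lt_of_le ht (min_le_right _ _)
    have hb1 : sSup (S (4*t)) ≤ ε/4 := by
      refine Real.sSup_le ?_ (by linarith)
      rintro r ⟨x, hx, y, hy, hxy, rfl⟩
      have hd : dist x y < δ := by
        rw [dist_eq_norm]
        have hm : max (4*t) 0 ≤ 4 * |t| :=
          max_le (by nlinarith [le_abs_self t]) (by positivity)
        nlinarith [abs_nonneg t]
      have := hδ' x hx y hy hd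
      rw [Real.dist_eq] at this
      linarith
    have hb2 : M * max t 0 ≤ ε/8 := by
      have hmt : max t 0 ≤ |t| :=
        max_le (le_abs_self t) (abs_nonneg t)
      have h1 : M * max t 0 ≤ M * |t| := mul_le_mul_of_nonneg_left hmt hM0.le
      have h2 : M * |t| ≤ ε/8 := by
        rw [lt_div_iff₀ (by positivity)] at ht2
        nlinarith
      linarith
    have hωt : ω t ≤ ε/4 + ε/8 := add_le_add hb1 hb2
    have hωt0 : 0 ≤ ω t := add_nonneg (hsup_nonneg _)
      (mul_nonneg hM0.le (le_max_right _ _))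
    rw [hω0, Real.dist_eq, sub_zero, abs_of_nonneg hωt0]
    exact lt_of_le_of_lt hωt (by linarith)
  -- key estimate (wlog ‖η‖ ≤ ‖ξ‖)
  have hkey : ∀ ξ η : W, ‖η‖ ≤ ‖ξ‖ →
      |f ξ - f η| ≤ ω (‖ξ - η‖ / (1 + ‖ξ‖ + ‖η‖)) * (1 + ‖ξ‖ + ‖η‖) := by
    intro ξ η hle
    set a : ℝ := 1 + ‖ξ‖ with hadef
    set b : ℝ := 1 + ‖η‖ with hbdef
    set s : ℝ := 1 + ‖ξ‖ + ‖η‖ with hsdef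
    have ha : (0:ℝ) < a := by rw [hadef]; positivity
    have hb : (0:ℝ) < b := by rw [hbdef]; positivity
    have hs : (0:ℝ) < s := by rw [hsdef]; positivity
    have has : a ≤ s := by rw [hadef, hsdef]; linarith [norm_nonneg η]
    have hs2a : s ≤ 2 * a := by rw [hadef, hsdef]; linarith
    set t : ℝ := ‖ξ - η‖ / s with htdef
    have ht0 : 0 ≤ t := div_nonneg (norm_nonneg _) hs.le
    have hts : t * s = ‖ξ - η‖ := div_mul_cancel₀ _ hs.ne'
    -- estimate on the hats
    have hhat : ‖a⁻¹ • ξ - b⁻¹ • η‖ ≤ 4 * t := by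
      have hdec : a⁻¹ • ξ - b⁻¹ • η = a⁻¹ • (ξ - η) + (a⁻¹ - b⁻¹) • η := by
        module
      have h1 : ‖a⁻¹ • (ξ - η)‖ = a⁻¹ * ‖ξ - η‖ := by
        rw [norm_smul, Real.norm_eq_abs, abs_of_pos (inv_pos.2 ha)]
      have h2 : |a⁻¹ - b⁻¹| * ‖η‖ ≤ a⁻¹ * ‖ξ - η‖ := by
        have hab : a⁻¹ - b⁻¹ = (b - a) / (a * b) := by field_simp
        have hba : |b - a| ≤ ‖ξ - η‖ := by
          have h := abs_norm_sub_norm_le η ξ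
          rw [norm_sub_rev] at h
          have hba' : b - a = ‖η‖ - ‖ξ‖ := by rw [hadef, hbdef]; ring
          rw [hba']; exact h
        have hηb : ‖η‖ ≤ b := by rw [hbdef]; linarith
        rw [hab, abs_div, abs_of_pos (mul_pos ha hb),
          div_mul_eq_mul_div, div_le_iff₀ (mul_pos ha hb)]
        calc |b - a| * ‖η‖ ≤ ‖ξ - η‖ * b :=
              mul_le_mul hba hηb (norm_nonneg _) (norm_nonneg _)
          _ = a⁻¹ * ‖ξ - η‖ * (a * b) := by field_simp
      have h3 : ‖a⁻¹ • ξ - b⁻¹ • η‖ ≤ 2 * (a⁻¹ * ‖ξ - η‖) := by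
        rw [hdec]
        calc ‖a⁻¹ • (ξ - η) + (a⁻¹ - b⁻¹) • η‖
            ≤ ‖a⁻¹ • (ξ - η)‖ + ‖(a⁻¹ - b⁻¹) • η‖ := norm_add_le _ _
          _ = a⁻¹ * ‖ξ - η‖ + |a⁻¹ - b⁻¹| * ‖η‖ := by
              rw [h1, norm_smul, Real.norm_eq_abs]
          _ ≤ a⁻¹ * ‖ξ - η‖ + a⁻¹ * ‖ξ - η‖ := by linarith
          _ = 2 * (a⁻¹ * ‖ξ - η‖) := by ring
      have h4 : 2 * (a⁻¹ * ‖ξ - η‖) ≤ 4 * t := by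
        rw [htdef, inv_mul_eq_div, ← mul_div_assoc, ← mul_div_assoc,
          div_le_div_iff₀ ha hs]
        nlinarith [norm_nonneg (ξ - η)]
      exact h3.trans h4
    -- membership and sup bound
    have hg1 : |g (a⁻¹ • ξ) - g (b⁻¹ • η)| ≤ sSup (S (4 * t)) := by
      refine le_csSup (hbdd _) ?_
      exact ⟨a⁻¹ • ξ, hmem ξ, b⁻¹ • η, hmem η,
        hhat.trans (le_max_left _ _), rfl⟩
    have hab2 : |a - b| ≤ ‖ξ - η‖ := by
      have h := abs_norm_sub_norm_le ξ η
      have : a - b = ‖ξ‖ - ‖η‖ := by rw [hadef, hbdef]; ring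
      rw [this]; exact h
    have hgη : |g (b⁻¹ • η)| ≤ M := hgb _ (hmem η)
    rw [hid ξ, hid η, ← hadef, ← hbdef]
    calc |a * g (a⁻¹ • ξ) - b * g (b⁻¹ • η)|
        = |a * (g (a⁻¹ • ξ) - g (b⁻¹ • η)) + (a - b) * g (b⁻¹ • η)| := by
          ring_nf
      _ ≤ |a * (g (a⁻¹ • ξ) - g (b⁻¹ • η))| + |(a - b) * g (b⁻¹ • η)| :=
          abs_add_le _ _
      _ = a * |g (a⁻¹ • ξ) - g (b⁻¹ • η)| + |a - b| * |g (b⁻¹ • η)| := by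
          rw [abs_mul, abs_mul, abs_of_pos ha]
      _ ≤ s * sSup (S (4 * t)) + ‖ξ - η‖ * M := by
          refine add_le_add ?_ ?_
          · exact mul_le_mul has hg1 (abs_nonneg _) hs.le
          · exact mul_le_mul hab2 hgη (abs_nonneg _) (norm_nonneg _)
      _ = (sSup (S (4 * t)) + M * t) * s := by rw [← hts]; ring
      _ = ω t * s := by
          show _ = (sSup (S (4 * t)) + M * max t 0) * s
          rw [max_eq_left ht0]
  refine ⟨hid, ⟨ω, hωmono, hω0, hωcont, ?_⟩, ⟨M, hM0, ?_⟩⟩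
  · intro ξ η
    rcases le_total ‖η‖ ‖ξ‖ with h | h
    · exact hkey ξ η h
    · have h2 := hkey η ξ h
      rw [abs_sub_comm, norm_sub_rev]
      have hcomm : 1 + ‖η‖ + ‖ξ‖ = 1 + ‖ξ‖ + ‖η‖ := by ring
      rwa [hcomm] at h2
  · intro ξ
    have h1 : |g ((1 + ‖ξ‖)⁻¹ • ξ)| ≤ M := hgb _ (hmem ξ)
    have h2 : (0:ℝ) ≤ 1 + ‖ξ‖ := by positivity
    rw [hid ξ, abs_mul, abs_of_nonneg h2]
    nlinarith
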